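/- Let H ∈ ℂ^{Nr×Nt} and G ∈ ℂ^{Ne×Nt}, let P_T > 0, and suppose H†H − G†G is NOT negative semidefinite. If (Q, Z, λ) satisfies the KKT conditions of the secrecy rate maximization problem, then Q is a global maximizer of C_s over the feasible set 𝒬 = { Q ⪰ 0 : tr(Q) ≤ P_T }; i.e., C_s(Q) ≥ C_s(Q') for every Hermitian positive semidefinite Q' with tr(Q') ≤ P_T. -/

import Mathlib

open Matrix
open scoped ComplexOrder

/-- The secrecy rate `C_s(Q) = ln det(I + H Q Hᴴ) − ln det(I + G Q Gᴴ)`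
(for positive semidefinite `Q` both determinants are positive reals). -/
noncomputable def secrecyRate {Nr Ne Nt : ℕ}
    (H : Matrix (Fin Nr) (Fin Nt) ℂ) (G : Matrix (Fin Ne) (Fin Nt) ℂ)
    (Q : Matrix (Fin Nt) (Fin Nt) ℂ) : ℝ :=
  Real.log ((1 + H * Q * Hᴴ).det.re) - Real.log ((1 + G * Q * Gᴴ).det.re)

/-- The KKT conditions of the secrecy rate maximization problem
`max { C_s(Q) : Q ⪰ 0, tr Q ≤ P_T }`: stationarity, primal feasibility,
dual feasibility and complementary slackness. -/
def IsKKTPoint {Nr Ne Nt : ℕ}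
    (H : Matrix (Fin Nr) (Fin Nt) ℂ) (G : Matrix (Fin Ne) (Fin Nt) ℂ) (PT : ℝ)
    (Q Z : Matrix (Fin Nt) (Fin Nt) ℂ) (l : ℝ) : Prop :=
  Hᴴ * (1 + H * Q * Hᴴ)⁻¹ * H - Gᴴ * (1 + G * Q * Gᴴ)⁻¹ * G
      - (l : ℂ) • (1 : Matrix (Fin Nt) (Fin Nt) ℂ) + Z = 0 ∧
    (Matrix.trace Q).re ≤ PT ∧
    0 ≤ l ∧
    l * ((Matrix.trace Q).re - PT) = 0 ∧
    Z.PosSemidef ∧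
    Q.PosSemidef ∧
    Q * Z = 0

namespace Matrix.PosSemidef
open scoped MatrixOrder

noncomputable def sqrt {n : Type*} [Fintype n] [DecidableEq n] {A : Matrix n n ℂ}
    (_hA : A.PosSemidef) : Matrix n n ℂ := CFC.sqrt A

theorem posSemidef_sqrt {n : Type*} [Fintype n] [DecidableEq n] {A : Matrix n n ℂ}
    (hA : A.PosSemidef) : hA.sqrt.PosSemidef := (CFC.sqrt_nonneg A).posSemidef

theorem sqrt_mul_self {n : Type*} [Fintype n] [DecidableEq n] {A : Matrix n n ℂ}
    (hA : A.PosSemidef) : hA.sqrt * hA.sqrt = A := CFC.sqrt_mul_sqrt_self A hA.nonneg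

end Matrix.PosSemidef

namespace SecrecyAux

variable {m n : Type*} [Fintype m] [DecidableEq m] [Fintype n] [DecidableEq n]

/-- push-through identity -/
theorem pushthrough (A : Matrix m n ℂ) (B : Matrix n m ℂ) (h : IsUnit (1 + A * B).det) :
    B * (1 + A * B)⁻¹ = (1 + B * A)⁻¹ * B := by
  have hBA : IsUnit (1 + B * A).det := by
    rw [det_one_add_mul_comm]; exact h
  have key : (1 + B * A) * B = B * (1 + A * B) := by
    rw [Matrix.add_mul, Matrix.mul_add, Matrix.one_mul, Matrix.mul_one, Matrix.mul_assoc]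
  calc B * (1 + A * B)⁻¹ = ((1 + B * A)⁻¹ * (1 + B * A)) * (B * (1 + A * B)⁻¹) := by
        rw [nonsing_inv_mul _ hBA, Matrix.one_mul]
    _ = (1 + B * A)⁻¹ * (((1 + B * A) * B) * (1 + A * B)⁻¹) := by
        simp only [Matrix.mul_assoc]
    _ = (1 + B * A)⁻¹ * (B * ((1 + A * B) * (1 + A * B)⁻¹)) := by
        rw [key, Matrix.mul_assoc]
    _ = (1 + B * A)⁻¹ * B := by rw [mul_nonsing_inv _ h, Matrix.mul_one]

/-- Master algebraic identity behind operator monotonicity/concavity of `A ↦ A(1-YA)⁻¹`. -/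
theorem master {A A' Y Ψ Ψ' : Matrix n n ℂ}
    (hΨ0 : Ψ' * (1 - Y * A') = A')
    (hΨ2 : (1 - A * Y) * Ψ = A)
    (hΨ'2 : (1 - A' * Y) * Ψ' = A') :
    Ψ' - Ψ = (1 + Ψ * Y) * (A' - A) * (1 + Y * Ψ)
      + (Ψ' - Ψ) * (Y - Y * A' * Y) * (Ψ' - Ψ) := by
  have s1 : (1 - A' * Y) * (Ψ' - Ψ) = (A' - A) * (1 + Y * Ψ) := by
    have e : (1 - A' * Y) * (Ψ' - Ψ)
        = ((1 - A' * Y) * Ψ') - ((1 - A * Y) * Ψ) - (A - A') * (Y * Ψ) := by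
      noncomm_ring
    rw [e, hΨ'2, hΨ2]
    noncomm_ring
  have s2 : (1 + Ψ' * Y) * (1 - A' * Y) = 1 := by
    have e : (1 + Ψ' * Y) * (1 - A' * Y) = 1 - A' * Y + (Ψ' * (1 - Y * A')) * Y := by
      noncomm_ring
    rw [e, hΨ0]
    noncomm_ring
  have s3 : Ψ' - Ψ = (1 + Ψ' * Y) * ((A' - A) * (1 + Y * Ψ)) := by
    rw [← s1, ← Matrix.mul_assoc, s2, one_mul]
  have s4 : (Ψ' - Ψ) * (Y - Y * A' * Y) * (Ψ' - Ψ)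
      = ((Ψ' - Ψ) * Y) * ((1 - A' * Y) * (Ψ' - Ψ)) := by
    noncomm_ring
  rw [s4, s1]
  calc Ψ' - Ψ = (1 + Ψ' * Y) * ((A' - A) * (1 + Y * Ψ)) := s3
    _ = (1 + Ψ * Y) * (A' - A) * (1 + Y * Ψ)
        + (Ψ' - Ψ) * Y * ((A' - A) * (1 + Y * Ψ)) := by noncomm_ring

/-- `l • 1` is PSD for `0 ≤ l`. -/
theorem posSemidef_real_smul_one {l : ℝ} (hl : 0 ≤ l) :
    ((l : ℂ) • (1 : Matrix n n ℂ)).PosSemidef := by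
  refine PosSemidef.of_dotProduct_mulVec_nonneg ?_ ?_
  · unfold Matrix.IsHermitian
    rw [conjTranspose_smul, conjTranspose_one]
    congr 1
    simp [Complex.conj_ofReal]
  · intro x
    rw [smul_mulVec, one_mulVec, dotProduct_smul]
    have h1 : (0:ℂ) ≤ (l:ℂ) := by rwa [Complex.zero_le_real]
    exact mul_nonneg h1 (dotProduct_star_self_nonneg x)

/-- A PSD matrix with nonzero determinant is PD. -/
theorem posDef_of_posSemidef_det_ne_zero {X : Matrix n n ℂ} (hX : X.PosSemidef)
    (hdet : X.det ≠ 0) : X.PosDef := by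
  refine PosDef.of_dotProduct_mulVec_pos hX.isHermitian fun x hx => ?_
  have h0 : star x ⬝ᵥ X *ᵥ x ≠ 0 := by
    intro h
    rw [hX.dotProduct_mulVec_zero_iff] at h
    have hunit : IsUnit X := (Matrix.isUnit_iff_isUnit_det X).mpr (isUnit_iff_ne_zero.mpr hdet)
    have : X⁻¹ *ᵥ (X *ᵥ x) = x := by
      rw [mulVec_mulVec, nonsing_inv_mul _ (isUnit_iff_ne_zero.mpr hdet), one_mulVec]
    rw [h] at this
    simp only [mulVec_zero] at this
    exact hx this.symm
  exact lt_of_le_of_ne (hX.dotProduct_mulVec_nonneg x) (Ne.symm h0)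

/-- Congruence by a matrix with invertible det preserves PD. -/
theorem posDef_conj {X : Matrix n n ℂ} (hX : X.PosDef) (C : Matrix n n ℂ)
    (hC : IsUnit C.det) : (C * X * Cᴴ).PosDef := by
  refine posDef_of_posSemidef_det_ne_zero (hX.posSemidef.mul_mul_conjTranspose_same C) ?_
  rw [det_mul, det_mul, det_conjTranspose]
  have hXd : X.det ≠ 0 := ne_of_gt hX.det_pos
  exact mul_ne_zero (mul_ne_zero hC.ne_zero hXd) (star_ne_zero.mpr hC.ne_zero)

/-- The determinant of a PD complex matrix is its (positive) real part. -/
theorem posDef_det_re_pos {X : Matrix n n ℂ} (hX : X.PosDef) : 0 < X.det.re :=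
  (Complex.lt_def.mp hX.det_pos).1

theorem posDef_det_eq_re {X : Matrix n n ℂ} (hX : X.PosDef) : X.det = (X.det.re : ℂ) := by
  have h := (Complex.lt_def.mp hX.det_pos).2
  exact Complex.ext rfl (by simp [← h])

/-- PSD matrices have nonnegative real trace. -/
theorem posSemidef_trace_re_nonneg {X : Matrix n n ℂ} (hX : X.PosSemidef) :
    0 ≤ X.trace.re := by
  have h : ∀ i, 0 ≤ (X i i).re := by
    intro i
    have h1 := hX.dotProduct_mulVec_nonneg (Pi.single i 1)
    have h2 : star (Pi.single i (1:ℂ)) ⬝ᵥ X *ᵥ Pi.single i 1 = X i i := by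
      simp [mulVec_single, dotProduct, Pi.single_apply, apply_ite]
    rw [h2] at h1
    exact (Complex.le_def.mp h1).1
  rw [Matrix.trace, Complex.re_sum]
  exact Finset.sum_nonneg fun i _ => h i



theorem herm_trace_eq {X : Matrix n n ℂ} (hX : X.IsHermitian) :
    X.trace = ((∑ i, hX.eigenvalues i : ℝ) : ℂ) := by
  conv_lhs => rw [hX.spectral_theorem, Unitary.conjStarAlgAut_apply]
  rw [trace_mul_cycle, Matrix.mem_unitaryGroup_iff'.mp hX.eigenvectorUnitary.2,
    Matrix.one_mul, trace_diagonal, Complex.ofReal_sum]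
  rfl

theorem herm_det_re {X : Matrix n n ℂ} (hX : X.IsHermitian) :
    X.det = ((∏ i, hX.eigenvalues i : ℝ) : ℂ) := by
  rw [hX.det_eq_prod_eigenvalues, Complex.ofReal_prod]
  rfl

/-- `log det M ≤ tr M - n` for PD `M`. -/
theorem log_det_le_trace {M : Matrix n n ℂ} (hM : M.PosDef) :
    Real.log M.det.re ≤ M.trace.re - Fintype.card n := by
  have hdet : M.det.re = ∏ i, hM.isHermitian.eigenvalues i := by
    rw [herm_det_re hM.isHermitian, Complex.ofReal_re]
  have htr : M.trace.re = ∑ i, hM.isHermitian.eigenvalues i := by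
    rw [herm_trace_eq hM.isHermitian, Complex.ofReal_re]
  rw [hdet, htr]
  have hpos := hM.eigenvalues_pos
  rw [Real.log_prod (fun i _ => ne_of_gt (hpos i))]
  calc ∑ i, Real.log (hM.isHermitian.eigenvalues i)
      ≤ ∑ i, (hM.isHermitian.eigenvalues i - 1) :=
        Finset.sum_le_sum fun i _ => Real.log_le_sub_one_of_pos (hpos i)
    _ = ∑ i, hM.isHermitian.eigenvalues i - Fintype.card n := by
        rw [Finset.sum_sub_distrib]
        simp [Finset.card_univ]

/-- `1 ≤ det (1 + X)` for PSD `X`. -/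
theorem one_le_det_one_add {X : Matrix n n ℂ} (hX : X.PosSemidef) :
    1 ≤ (1 + X).det.re := by
  have hH := hX.isHermitian
  have hUU : (hH.eigenvectorUnitary : Matrix n n ℂ) * star (hH.eigenvectorUnitary : Matrix n n ℂ)
      = 1 := Matrix.mem_unitaryGroup_iff.mp hH.eigenvectorUnitary.2
  have e : (1 : Matrix n n ℂ) + X
      = (hH.eigenvectorUnitary : Matrix n n ℂ)
        * (1 + diagonal (RCLike.ofReal ∘ hH.eigenvalues))
        * star (hH.eigenvectorUnitary : Matrix n n ℂ) := by
    rw [Matrix.mul_add, Matrix.add_mul, Matrix.mul_one, hUU]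
    conv_lhs => rw [hH.spectral_theorem, Unitary.conjStarAlgAut_apply]
  have edet : (1 + X).det = ((∏ i, (1 + hH.eigenvalues i) : ℝ) : ℂ) := by
    rw [e, det_mul, det_mul]
    have h1 : (hH.eigenvectorUnitary : Matrix n n ℂ).det
        * (star (hH.eigenvectorUnitary : Matrix n n ℂ)).det = 1 := by
      rw [← det_mul, hUU, det_one]
    rw [mul_comm (hH.eigenvectorUnitary : Matrix n n ℂ).det _, mul_assoc, h1, mul_one]
    have e1 : (1 : Matrix n n ℂ) + diagonal (RCLike.ofReal ∘ hH.eigenvalues)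
        = diagonal (fun i => ((1 + hH.eigenvalues i : ℝ) : ℂ)) := by
      rw [← Matrix.diagonal_one, diagonal_add]
      congr 1
      funext i
      push_cast
      rfl
    rw [e1, det_diagonal, Complex.ofReal_prod]
  have : (1 + X).det.re = ∏ i, (1 + hH.eigenvalues i) := by rw [edet, Complex.ofReal_re]
  rw [this]
  have h1 : (1:ℝ) = ∏ _i : n, (1:ℝ) := by simp
  rw [h1]
  refine Finset.prod_le_prod (fun i _ => by norm_num) fun i _ => ?_
  have := hX.eigenvalues_nonneg i
  linarith


/-- square root of a PD matrix is PD. -/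
theorem posDef_sqrt {X : Matrix n n ℂ} (hX : X.PosDef) : (hX.posSemidef).sqrt.PosDef := by
  refine posDef_of_posSemidef_det_ne_zero hX.posSemidef.posSemidef_sqrt ?_
  intro h
  have : X.det = 0 := by
    rw [← hX.posSemidef.sqrt_mul_self, det_mul, h, zero_mul]
  exact ne_of_gt hX.det_pos this

/-- Tangent (gradient) inequality for `log det` at `B`. -/
theorem log_det_tangent {A B : Matrix n n ℂ} (hA : A.PosDef) (hB : B.PosDef) :
    Real.log A.det.re ≤ Real.log B.det.re + ((B⁻¹ * (A - B)).trace).re := by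
  set S : Matrix n n ℂ := hB.posSemidef.sqrt with hS
  have hSpd : S.PosDef := posDef_sqrt hB
  have hSS : S * S = B := hB.posSemidef.sqrt_mul_self
  have hSh : Sᴴ = S := hSpd.isHermitian
  have hSu : IsUnit S.det := isUnit_iff_ne_zero.mpr (ne_of_gt hSpd.det_pos)
  have hCpd : (S⁻¹).PosDef := hSpd.inv
  have hCh : (S⁻¹)ᴴ = S⁻¹ := hCpd.isHermitian
  have hCu : IsUnit (S⁻¹).det := isUnit_iff_ne_zero.mpr (ne_of_gt hCpd.det_pos)
  set M : Matrix n n ℂ := S⁻¹ * A * S⁻¹ with hM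
  have hMpd : M.PosDef := by
    have := posDef_conj hA (S⁻¹) hCu
    rwa [hCh] at this
  have hdetrel : M.det * B.det = A.det := by
    rw [hM, ← hSS, det_mul, det_mul, det_mul]
    have h1 : (S⁻¹).det * S.det = 1 := by
      rw [← det_mul, nonsing_inv_mul _ hSu, det_one]
    calc (S⁻¹).det * A.det * (S⁻¹).det * (S.det * S.det)
        = A.det * (((S⁻¹).det * S.det) * ((S⁻¹).det * S.det)) := by ring
      _ = A.det := by rw [h1]; ring
  have htrrel : (B⁻¹ * A).trace = M.trace := by
    have hBinv : B⁻¹ = S⁻¹ * S⁻¹ := by rw [← hSS, Matrix.mul_inv_rev]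
    rw [hBinv, hM, Matrix.mul_assoc, trace_mul_comm]
  have ha := posDef_det_re_pos hA
  have hb := posDef_det_re_pos hB
  have hm := posDef_det_re_pos hMpd
  have hreal : M.det.re * B.det.re = A.det.re := by
    have : ((M.det.re * B.det.re : ℝ) : ℂ) = ((A.det.re : ℝ) : ℂ) := by
      push_cast
      rw [← posDef_det_eq_re hMpd, ← posDef_det_eq_re hB, ← posDef_det_eq_re hA, hdetrel]
    exact_mod_cast this
  have hlog : Real.log A.det.re = Real.log B.det.re + Real.log M.det.re := by
    rw [← hreal, Real.log_mul (ne_of_gt hm) (ne_of_gt hb)]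
    ring
  rw [hlog]
  have hkey := log_det_le_trace hMpd
  have htr2 : ((B⁻¹ * (A - B)).trace).re = M.trace.re - Fintype.card n := by
    have hBu : IsUnit B.det := isUnit_iff_ne_zero.mpr (ne_of_gt hB.det_pos)
    rw [Matrix.mul_sub, nonsing_inv_mul _ hBu, trace_sub, htrrel]
    rw [Complex.sub_re, trace_one]
    norm_num
  rw [htr2]
  linarith

/-- determinant monotonicity : `det P ≤ det (P + S)` for `P` PD, `S` PSD. -/
theorem det_re_mono {P S : Matrix n n ℂ} (hP : P.PosDef) (hS : S.PosSemidef) :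
    P.det.re ≤ (P + S).det.re := by
  set T : Matrix n n ℂ := hP.posSemidef.sqrt with hT
  have hTpd : T.PosDef := posDef_sqrt hP
  have hTT : T * T = P := hP.posSemidef.sqrt_mul_self
  have hTh : Tᴴ = T := hTpd.isHermitian
  have hTu : IsUnit T.det := isUnit_iff_ne_zero.mpr (ne_of_gt hTpd.det_pos)
  have hCpd : (T⁻¹).PosDef := hTpd.inv
  have hCh : (T⁻¹)ᴴ = T⁻¹ := hCpd.isHermitian
  have hX : (T⁻¹ * S * T⁻¹).PosSemidef := by
    have := hS.mul_mul_conjTranspose_same (T⁻¹)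
    rwa [hCh] at this
  have hde : (T⁻¹ * (P + S) * T⁻¹) = 1 + T⁻¹ * S * T⁻¹ := by
    rw [Matrix.mul_add, Matrix.add_mul]
    congr 1
    rw [← hTT, ← Matrix.mul_assoc, nonsing_inv_mul _ hTu, Matrix.one_mul,
      mul_nonsing_inv _ hTu]
  have h1 : (1:ℝ) ≤ (T⁻¹ * (P + S) * T⁻¹).det.re := by
    rw [hde]; exact one_le_det_one_add hX
  have hc : (T⁻¹).det * (T⁻¹).det * P.det = 1 := by
    rw [← hTT, det_mul]
    have h2 : (T⁻¹).det * T.det = 1 := by rw [← det_mul, nonsing_inv_mul _ hTu, det_one]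
    calc (T⁻¹).det * (T⁻¹).det * (T.det * T.det)
        = ((T⁻¹).det * T.det) * ((T⁻¹).det * T.det) := by ring
      _ = 1 := by rw [h2]; ring
  have hCinv : (T⁻¹).det = ((T⁻¹).det.re : ℂ) := posDef_det_eq_re hCpd
  have hPS : (P + S).PosDef := hP.add_posSemidef hS
  set c : ℝ := (T⁻¹).det.re with hcdef
  have hcpos : 0 < c := posDef_det_re_pos hCpd
  have hc2P : c * c * P.det.re = 1 := by
    have : ((c * c * P.det.re : ℝ) : ℂ) = ((1:ℝ):ℂ) := by
      push_cast
      rw [← hCinv, ← posDef_det_eq_re hP, hc]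
    exact_mod_cast this
  have hc2PS : (T⁻¹ * (P + S) * T⁻¹).det.re = c * c * (P + S).det.re := by
    have : (T⁻¹ * (P + S) * T⁻¹).det = ((c * c * (P + S).det.re : ℝ) : ℂ) := by
      rw [det_mul, det_mul]
      push_cast
      rw [← hCinv, ← posDef_det_eq_re hPS]
      ring
    rw [this, Complex.ofReal_re]
  rw [hc2PS] at h1
  have hPre := posDef_det_re_pos hP
  nlinarith

/-- trace of product of two PSD matrices has nonneg real part. -/
theorem trace_mul_psd_re_nonneg {A B : Matrix n n ℂ} (hA : A.PosSemidef) (hB : B.PosSemidef) :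
    0 ≤ ((A * B).trace).re := by
  set s : Matrix n n ℂ := hA.sqrt with hs
  have hss : s * s = A := hA.sqrt_mul_self
  have hsh : sᴴ = s := hA.posSemidef_sqrt.isHermitian
  have h1 : (A * B).trace = (s * B * s).trace := by
    rw [← hss, Matrix.mul_assoc, trace_mul_comm]
  rw [h1]
  refine posSemidef_trace_re_nonneg ?_
  have := hB.mul_mul_conjTranspose_same s
  rwa [hsh] at this

section Chan
variable (H : Matrix m n ℂ) (Q : Matrix n n ℂ)

theorem chan_pd (hQ : Q.PosSemidef) : (1 + H * Q * Hᴴ).PosDef :=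
  Matrix.PosDef.one.add_posSemidef (hQ.mul_mul_conjTranspose_same H)

theorem chan_det : (1 + H * Q * Hᴴ).det = (1 + Hᴴ * H * Q).det := by
  rw [det_one_add_mul_comm (H * Q) Hᴴ, ← Matrix.mul_assoc]

theorem chan_unit1 (hQ : Q.PosSemidef) : IsUnit (1 + Hᴴ * H * Q).det := by
  rw [← chan_det]
  exact isUnit_iff_ne_zero.mpr (ne_of_gt (chan_pd H Q hQ).det_pos)

theorem chan_unit2 (hQ : Q.PosSemidef) : IsUnit (1 + Q * (Hᴴ * H)).det := by
  rw [← det_one_add_mul_comm]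
  exact chan_unit1 H Q hQ

theorem chan_K_eq (hQ : Q.PosSemidef) :
    Hᴴ * (1 + H * Q * Hᴴ)⁻¹ * H = (1 + Hᴴ * H * Q)⁻¹ * (Hᴴ * H) := by
  have hu : IsUnit (1 + H * Q * Hᴴ).det :=
    isUnit_iff_ne_zero.mpr (ne_of_gt (chan_pd H Q hQ).det_pos)
  have h1 := SecrecyAux.pushthrough (H * Q) Hᴴ hu
  rw [← Matrix.mul_assoc Hᴴ H Q] at h1
  calc Hᴴ * (1 + H * Q * Hᴴ)⁻¹ * H = ((1 + Hᴴ * H * Q)⁻¹ * Hᴴ) * H := by rw [h1]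
    _ = (1 + Hᴴ * H * Q)⁻¹ * (Hᴴ * H) := by rw [Matrix.mul_assoc]

theorem chan_WK (hQ : Q.PosSemidef) :
    (1 + Hᴴ * H * Q) * (Hᴴ * (1 + H * Q * Hᴴ)⁻¹ * H) = Hᴴ * H := by
  rw [chan_K_eq H Q hQ, ← Matrix.mul_assoc, mul_nonsing_inv _ (chan_unit1 H Q hQ),
    Matrix.one_mul]

theorem chan_KW (hQ : Q.PosSemidef) :
    (Hᴴ * (1 + H * Q * Hᴴ)⁻¹ * H) * (1 + Q * (Hᴴ * H)) = Hᴴ * H := by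
  rw [chan_K_eq H Q hQ]
  have e : (Hᴴ * H) * (1 + Q * (Hᴴ * H)) = (1 + Hᴴ * H * Q) * (Hᴴ * H) := by
    noncomm_ring
  rw [Matrix.mul_assoc, e, ← Matrix.mul_assoc, nonsing_inv_mul _ (chan_unit1 H Q hQ),
    Matrix.one_mul]

theorem chan_K_herm (hQ : Q.PosSemidef) : (Hᴴ * (1 + H * Q * Hᴴ)⁻¹ * H).IsHermitian := by
  have hpd := chan_pd H Q hQ
  have hinv : ((1 + H * Q * Hᴴ)⁻¹).IsHermitian := hpd.inv.isHermitian
  have h2 : (Hᴴ * (1 + H * Q * Hᴴ)⁻¹ * H)ᴴ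
      = Hᴴ * ((1 + H * Q * Hᴴ)⁻¹)ᴴ * H := by
    simp only [conjTranspose_mul, conjTranspose_conjTranspose, Matrix.mul_assoc]
  unfold Matrix.IsHermitian
  rw [h2, hinv.eq]

theorem contraction_core {m' : Type*} [Fintype m'] [DecidableEq m'] (Y : Matrix m' n ℂ) :
    1 - Yᴴ * (1 + Y * Yᴴ)⁻¹ * Y = (1 + Yᴴ * Y)⁻¹ := by
  have hNpsd : (Yᴴ * Y).PosSemidef := posSemidef_conjTranspose_mul_self Y
  have hNpd : (1 + Yᴴ * Y).PosDef := Matrix.PosDef.one.add_posSemidef hNpsd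
  have hNu : IsUnit (1 + Yᴴ * Y).det := isUnit_iff_ne_zero.mpr (ne_of_gt hNpd.det_pos)
  have hAu : IsUnit (1 + Y * Yᴴ).det := by
    rw [det_one_add_mul_comm]; exact hNu
  rw [SecrecyAux.pushthrough Y Yᴴ hAu, Matrix.mul_assoc]
  have e4 : (1 + Yᴴ * Y)⁻¹ * (1 + Yᴴ * Y) = 1 := nonsing_inv_mul _ hNu
  have e5 : (1 + Yᴴ * Y)⁻¹ * (1 + Yᴴ * Y)
      = (1 + Yᴴ * Y)⁻¹ + (1 + Yᴴ * Y)⁻¹ * (Yᴴ * Y) := by noncomm_ring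
  rw [e5] at e4
  have e6 : (1 + Yᴴ * Y)⁻¹ * (Yᴴ * Y) = 1 - (1 + Yᴴ * Y)⁻¹ := by
    rw [eq_sub_iff_add_eq, add_comm]
    exact e4
  rw [e6, sub_sub_cancel]

theorem chan_contraction (hQ : Q.PosSemidef) :
    (Q - Q * (Hᴴ * (1 + H * Q * Hᴴ)⁻¹ * H) * Q).PosSemidef := by
  obtain ⟨sQ, hsQpsd, hsh, hss⟩ :
      ∃ s : Matrix n n ℂ, s.PosSemidef ∧ sᴴ = s ∧ s * s = Q :=
    ⟨hQ.sqrt, hQ.posSemidef_sqrt, hQ.posSemidef_sqrt.isHermitian, hQ.sqrt_mul_self⟩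
  have eK : Q - Q * (Hᴴ * (1 + H * Q * Hᴴ)⁻¹ * H) * Q
      = sQ * (1 - (H * sQ)ᴴ * (1 + (H * sQ) * (H * sQ)ᴴ)⁻¹ * (H * sQ)) * sQ := by
    rw [← hss]
    simp only [conjTranspose_mul, hsh, Matrix.mul_sub, Matrix.sub_mul, Matrix.mul_one,
      Matrix.one_mul, Matrix.mul_assoc]
  rw [eK, contraction_core]
  have hNpd : (1 + (H * sQ)ᴴ * (H * sQ)).PosDef :=
    Matrix.PosDef.one.add_posSemidef (posSemidef_conjTranspose_mul_self _)
  have := hNpd.inv.posSemidef.mul_mul_conjTranspose_same sQ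
  rwa [hsh] at this

end Chan

section Phi
variable (T Q : Matrix n n ℂ)

theorem phi_unit (hT : T.PosSemidef) (hQ : Q.PosSemidef) : IsUnit (1 + T * Q).det := by
  obtain ⟨sQ, hsQpsd, hsh, hss⟩ :
      ∃ s : Matrix n n ℂ, s.PosSemidef ∧ sᴴ = s ∧ s * s = Q :=
    ⟨hQ.sqrt, hQ.posSemidef_sqrt, hQ.posSemidef_sqrt.isHermitian, hQ.sqrt_mul_self⟩
  have hmid : (sQ * T * sQ).PosSemidef := by
    have := hT.conjTranspose_mul_mul_same sQ
    rwa [hsh] at this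
  have hpd : (1 + sQ * T * sQ).PosDef := Matrix.PosDef.one.add_posSemidef hmid
  have hdet : (1 + T * Q).det = (1 + sQ * T * sQ).det := by
    rw [← hss]
    have e1 : T * (sQ * sQ) = (T * sQ) * sQ := by rw [Matrix.mul_assoc]
    rw [e1, det_one_add_mul_comm, ← Matrix.mul_assoc]
  rw [hdet]
  exact isUnit_iff_ne_zero.mpr (ne_of_gt hpd.det_pos)

theorem phi_mul (hT : T.PosSemidef) (hQ : Q.PosSemidef) :
    (Q * (1 + T * Q)⁻¹) * (1 + T * Q) = Q := by
  rw [Matrix.mul_assoc, nonsing_inv_mul _ (phi_unit T Q hT hQ), Matrix.mul_one]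

theorem phi_psd (hT : T.PosSemidef) (hQ : Q.PosSemidef) :
    (Q * (1 + T * Q)⁻¹).PosSemidef := by
  obtain ⟨sQ, hsQpsd, hsh, hss⟩ :
      ∃ s : Matrix n n ℂ, s.PosSemidef ∧ sᴴ = s ∧ s * s = Q :=
    ⟨hQ.sqrt, hQ.posSemidef_sqrt, hQ.posSemidef_sqrt.isHermitian, hQ.sqrt_mul_self⟩
  have hmid : (sQ * T * sQ).PosSemidef := by
    have := hT.conjTranspose_mul_mul_same sQ
    rwa [hsh] at this
  have hpd : (1 + sQ * T * sQ).PosDef := Matrix.PosDef.one.add_posSemidef hmid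
  have hu : IsUnit (1 + sQ * T * sQ).det := isUnit_iff_ne_zero.mpr (ne_of_gt hpd.det_pos)
  have e : sQ * (1 + T * Q) = (1 + sQ * T * sQ) * sQ := by
    rw [← hss]; noncomm_ring
  have h : (sQ * (1 + sQ * T * sQ)⁻¹ * sQ) * (1 + T * Q) = Q := by
    calc (sQ * (1 + sQ * T * sQ)⁻¹ * sQ) * (1 + T * Q)
        = sQ * (1 + sQ * T * sQ)⁻¹ * (sQ * (1 + T * Q)) := by
          simp only [Matrix.mul_assoc]
      _ = sQ * ((1 + sQ * T * sQ)⁻¹ * ((1 + sQ * T * sQ) * sQ)) := by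
          rw [e]; simp only [Matrix.mul_assoc]
      _ = Q := by rw [← Matrix.mul_assoc (1 + sQ * T * sQ)⁻¹, nonsing_inv_mul _ hu,
          Matrix.one_mul, hss]
  have key : Q * (1 + T * Q)⁻¹ = sQ * (1 + sQ * T * sQ)⁻¹ * sQ := by
    have h2 := congrArg (fun X => X * (1 + T * Q)⁻¹) h
    rw [Matrix.mul_assoc, mul_nonsing_inv _ (phi_unit T Q hT hQ), Matrix.mul_one] at h2
    rw [← h2]
  rw [key]
  have := hpd.inv.posSemidef.mul_mul_conjTranspose_same sQ
  rwa [hsh] at this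

end Phi

/-- commutation of `X` with `(1+X)⁻¹`. -/
theorem inv_one_add_comm (X : Matrix n n ℂ) (h : IsUnit (1 + X).det) :
    (1 + X)⁻¹ * X = X * (1 + X)⁻¹ := by
  have e : X * (1 + X) = (1 + X) * X := by noncomm_ring
  calc (1 + X)⁻¹ * X
      = (1 + X)⁻¹ * X * ((1 + X) * (1 + X)⁻¹) := by
        rw [mul_nonsing_inv _ h, Matrix.mul_one]
    _ = (1 + X)⁻¹ * (X * (1 + X)) * (1 + X)⁻¹ := by simp only [Matrix.mul_assoc]
    _ = (1 + X)⁻¹ * ((1 + X) * X) * (1 + X)⁻¹ := by rw [e]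
    _ = X * (1 + X)⁻¹ := by
        rw [← Matrix.mul_assoc, nonsing_inv_mul _ h, Matrix.one_mul]

end SecrecyAux

open SecrecyAux in
set_option maxHeartbeats 2000000 in
/-- If `HᴴH − GᴴG` is not negative semidefinite and `(Q, Z, λ)`
satisfies the KKT conditions, then `Q` globally maximizes `C_s` over the feasible
set `{ Q ⪰ 0 : tr Q ≤ P_T }`. -/
theorem stmt_1 {Nr Ne Nt : ℕ}
    (H : Matrix (Fin Nr) (Fin Nt) ℂ) (G : Matrix (Fin Ne) (Fin Nt) ℂ)
    (PT : ℝ) (hPT : 0 < PT)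
    (hnd : ¬ (-(Hᴴ * H - Gᴴ * G)).PosSemidef)
    (Q Z : Matrix (Fin Nt) (Fin Nt) ℂ) (l : ℝ)
    (hKKT : IsKKTPoint H G PT Q Z l) :
    ∀ Q' : Matrix (Fin Nt) (Fin Nt) ℂ, Q'.PosSemidef → (Matrix.trace Q').re ≤ PT →
      secrecyRate H G Q' ≤ secrecyRate H G Q := by
  intro Q' hQ'psd hQ'tr
  obtain ⟨hstat, htrQ, hl, hcomp, hZpsd, hQpsd, hQZ⟩ := hKKT
  clear hnd hPT htrQ
  -- opaque abbreviations
  obtain ⟨W1, hW1⟩ : ∃ X : Matrix (Fin Nt) (Fin Nt) ℂ, X = Hᴴ * H := ⟨_, rfl⟩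
  obtain ⟨T, hT⟩ : ∃ X : Matrix (Fin Nt) (Fin Nt) ℂ, X = Gᴴ * G := ⟨_, rfl⟩
  obtain ⟨K1, hK1⟩ : ∃ X : Matrix (Fin Nt) (Fin Nt) ℂ, X = Hᴴ * (1 + H * Q * Hᴴ)⁻¹ * H :=
    ⟨_, rfl⟩
  obtain ⟨K2, hK2⟩ : ∃ X : Matrix (Fin Nt) (Fin Nt) ℂ, X = Gᴴ * (1 + G * Q * Gᴴ)⁻¹ * G :=
    ⟨_, rfl⟩
  obtain ⟨M, hM⟩ : ∃ X : Matrix (Fin Nt) (Fin Nt) ℂ, X = K1 + Z := ⟨_, rfl⟩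
  obtain ⟨R, hR⟩ : ∃ X : Matrix (Fin Nt) (Fin Nt) ℂ, X = 1 + T * Q := ⟨_, rfl⟩
  obtain ⟨R', hR'⟩ : ∃ X : Matrix (Fin Nt) (Fin Nt) ℂ, X = 1 + T * Q' := ⟨_, rfl⟩
  obtain ⟨Φ, hΦ⟩ : ∃ X : Matrix (Fin Nt) (Fin Nt) ℂ, X = Q * R⁻¹ := ⟨_, rfl⟩
  obtain ⟨Φ', hΦ'⟩ : ∃ X : Matrix (Fin Nt) (Fin Nt) ℂ, X = Q' * R'⁻¹ := ⟨_, rfl⟩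
  rw [← hK1, ← hK2] at hstat
  -- Hermitian basics
  have hQh : Qᴴ = Q := hQpsd.isHermitian
  have hQ'h : Q'ᴴ = Q' := hQ'psd.isHermitian
  have hW1h : W1.IsHermitian := by rw [hW1]; exact isHermitian_conjTranspose_mul_self H
  have hTh : T.IsHermitian := by rw [hT]; exact isHermitian_conjTranspose_mul_self G
  have hW1psd : W1.PosSemidef := by rw [hW1]; exact posSemidef_conjTranspose_mul_self H
  have hTpsd : T.PosSemidef := by rw [hT]; exact posSemidef_conjTranspose_mul_self G
  -- PD of the four basic matrices
  have hA1pd : (1 + H * Q * Hᴴ).PosDef := chan_pd H Q hQpsd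
  have hA2pd : (1 + G * Q * Gᴴ).PosDef := chan_pd G Q hQpsd
  have hA1'pd : (1 + H * Q' * Hᴴ).PosDef := chan_pd H Q' hQ'psd
  have hA2'pd : (1 + G * Q' * Gᴴ).PosDef := chan_pd G Q' hQ'psd
  -- channel lemma instances, folded
  have hWK1 : (1 + W1 * Q) * K1 = W1 := by
    rw [hW1, hK1]; exact chan_WK H Q hQpsd
  have hK1W : K1 * (1 + Q * W1) = W1 := by
    rw [hW1, hK1]; exact chan_KW H Q hQpsd
  have hK2W : K2 * (1 + Q * T) = T := by
    rw [hT, hK2]; exact chan_KW G Q hQpsd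
  have hK1eq : K1 = (1 + W1 * Q)⁻¹ * W1 := by
    rw [hW1, hK1]; exact chan_K_eq H Q hQpsd
  have hu1 : IsUnit (1 + W1 * Q).det := by rw [hW1]; exact chan_unit1 H Q hQpsd
  have hu1' : IsUnit (1 + Q * W1).det := by rw [hW1]; exact chan_unit2 H Q hQpsd
  have huR : IsUnit R.det := by rw [hR, hT]; exact chan_unit1 G Q hQpsd
  have huR' : IsUnit R'.det := by rw [hR', hT]; exact chan_unit1 G Q' hQ'psd
  have huQT : IsUnit (1 + Q * T).det := by rw [hT]; exact chan_unit2 G Q hQpsd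
  have hK1h : K1.IsHermitian := by rw [hK1]; exact chan_K_herm H Q hQpsd
  have hcontr : (Q - Q * K1 * Q).PosSemidef := by
    rw [hK1]; exact chan_contraction H Q hQpsd
  -- det identities
  have dA1 : (1 + H * Q * Hᴴ).det = (1 + W1 * Q).det := by rw [hW1]; exact chan_det H Q
  have dA2 : (1 + G * Q * Gᴴ).det = R.det := by rw [hR, hT]; exact chan_det G Q
  have dA1' : (1 + H * Q' * Hᴴ).det = (1 + W1 * Q').det := by rw [hW1]; exact chan_det H Q'
  have dA2' : (1 + G * Q' * Gᴴ).det = R'.det := by rw [hR', hT]; exact chan_det G Q'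
  -- Z relations
  have hZh : Zᴴ = Z := hZpsd.isHermitian
  have hZQ : Z * Q = 0 := by
    have h := congrArg conjTranspose hQZ
    rwa [conjTranspose_mul, hZh, hQh, conjTranspose_zero] at h
  have hMQ : M * Q = K1 * Q := by rw [hM, Matrix.add_mul, hZQ, add_zero]
  have hQM : Q * M = Q * K1 := by rw [hM, Matrix.mul_add, hQZ, add_zero]
  have hMh : M.IsHermitian := by rw [hM]; exact hK1h.add hZpsd.isHermitian
  -- stationarity rearranged
  have hM2 : M = K2 + (l : ℂ) • (1 : Matrix (Fin Nt) (Fin Nt) ℂ) := by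
    have h3 : M - (K2 + (l : ℂ) • (1 : Matrix (Fin Nt) (Fin Nt) ℂ)) = 0 := by
      rw [hM, ← hstat]; abel
    exact sub_eq_zero.mp h3
  -- Wt
  obtain ⟨Wt, hWt⟩ : ∃ X : Matrix (Fin Nt) (Fin Nt) ℂ, X = M * (1 + Q * W1) := ⟨_, rfl⟩
  have hWtQ : Wt * Q = W1 * Q := by
    have e1 : (1 + Q * W1) * Q = Q * (1 + W1 * Q) := by noncomm_ring
    calc Wt * Q = M * ((1 + Q * W1) * Q) := by rw [hWt, Matrix.mul_assoc]
      _ = (M * Q) * (1 + W1 * Q) := by rw [e1, ← Matrix.mul_assoc]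
      _ = K1 * (Q * (1 + W1 * Q)) := by rw [hMQ, Matrix.mul_assoc]
      _ = K1 * ((1 + Q * W1) * Q) := by rw [e1]
      _ = (K1 * (1 + Q * W1)) * Q := by rw [← Matrix.mul_assoc]
      _ = W1 * Q := by rw [hK1W]
  have hcomm : W1 * Q * K1 = K1 * Q * W1 := by
    have c1 := inv_one_add_comm (W1 * Q) hu1
    calc W1 * Q * K1 = ((W1 * Q) * (1 + W1 * Q)⁻¹) * W1 := by
          rw [hK1eq]; simp only [Matrix.mul_assoc]
      _ = ((1 + W1 * Q)⁻¹ * (W1 * Q)) * W1 := by rw [c1]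
      _ = K1 * Q * W1 := by rw [hK1eq]; simp only [Matrix.mul_assoc]
  have hWtsym : (1 + W1 * Q) * M = M * (1 + Q * W1) := by
    calc (1 + W1 * Q) * M = M + W1 * (Q * M) := by noncomm_ring
      _ = M + W1 * (Q * K1) := by rw [hQM]
      _ = M + K1 * Q * W1 := by rw [← Matrix.mul_assoc, hcomm]
      _ = M + (M * Q) * W1 := by rw [hMQ]
      _ = M * (1 + Q * W1) := by noncomm_ring
  have hWth : Wt.IsHermitian := by
    unfold Matrix.IsHermitian
    have e1 : Wtᴴ = (1 + W1 * Q) * M := by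
      rw [hWt, conjTranspose_mul, conjTranspose_add, conjTranspose_one, conjTranspose_mul,
        hW1h.eq, hQh, hMh.eq]
    rw [e1, hWtsym, hWt]
  have hWtM : (1 + Wt * Q) * M = Wt := by
    have e1 : (1 + Wt * Q) * M = M + (Wt * Q) * M := by noncomm_ring
    rw [e1, hWtQ]
    have e2 : M + (W1 * Q) * M = (1 + W1 * Q) * M := by noncomm_ring
    rw [e2, hWtsym, ← hWt]
  have h1WtQ : (1 : Matrix (Fin Nt) (Fin Nt) ℂ) + Wt * Q = 1 + W1 * Q := by rw [hWtQ]
  -- relations for master applications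
  have hinv1' : (1 + Q * W1) * (1 - Q * M) = 1 := by
    have e0 : (1 : Matrix (Fin Nt) (Fin Nt) ℂ) - Q * M = 1 - Q * K1 := by rw [hQM]
    rw [e0]
    have e : (1 + Q * W1) * (1 - Q * K1) = 1 + Q * W1 - Q * ((1 + W1 * Q) * K1) := by
      noncomm_ring
    rw [e, hWK1]
    abel
  have hβ0 : Wt * (1 - Q * M) = M := by
    rw [hWt, Matrix.mul_assoc, hinv1', Matrix.mul_one]
  have hβ2 : (1 - K1 * Q) * W1 = K1 := by
    have e : (1 - K1 * Q) * W1 = W1 - (K1 * (1 + Q * W1) - K1) := by noncomm_ring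
    rw [e, hK1W, sub_sub_cancel]
  have hβ'2 : (1 - M * Q) * Wt = M := by
    have h := congrArg conjTranspose hβ0
    rwa [conjTranspose_mul, conjTranspose_sub, conjTranspose_one, conjTranspose_mul,
      hMh.eq, hQh, hWth.eq] at h
  have hα2 : (1 - K2 * Q) * T = K2 := by
    have e : (1 - K2 * Q) * T = T - (K2 * (1 + Q * T) - K2) := by noncomm_ring
    rw [e, hK2W, sub_sub_cancel]
  have hVpsd : (Q - Q * M * Q).PosSemidef := by
    have e : Q * M * Q = Q * K1 * Q := by rw [hQM]
    rw [e]; exact hcontr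
  have hMK1 : M - K1 = Z := by rw [hM]; abel
  have hMK2 : M - K2 = (l : ℂ) • (1 : Matrix (Fin Nt) (Fin Nt) ℂ) := by
    rw [hM2]; abel
  have hconjh : (1 + Q * W1)ᴴ = 1 + W1 * Q := by
    rw [conjTranspose_add, conjTranspose_one, conjTranspose_mul, hW1h.eq, hQh]
  have hconjT : (1 + Q * T)ᴴ = 1 + T * Q := by
    rw [conjTranspose_add, conjTranspose_one, conjTranspose_mul, hTh.eq, hQh]
  have hconjT2 : (1 + T * Q)ᴴ = 1 + Q * T := by
    rw [conjTranspose_add, conjTranspose_one, conjTranspose_mul, hTh.eq, hQh]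
  -- master β : Wt ⪰ W1
  have hβPSD : (Wt - W1).PosSemidef := by
    have idβ := SecrecyAux.master hβ0 hβ2 hβ'2
    rw [idβ, hMK1]
    apply Matrix.PosSemidef.add
    · have h := hZpsd.conjTranspose_mul_mul_same (1 + Q * W1)
      rwa [hconjh] at h
    · have hDh : (Wt - W1)ᴴ = Wt - W1 := (hWth.sub hW1h).eq
      have h := hVpsd.conjTranspose_mul_mul_same (Wt - W1)
      rwa [hDh] at h
  -- master α : Wt ⪰ T
  have hDpsd0 : (Wt - T).PosSemidef := by
    have idα := SecrecyAux.master hβ0 hα2 hβ'2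
    rw [idα, hMK2]
    apply Matrix.PosSemidef.add
    · have hsm : ((l : ℂ) • (1 : Matrix (Fin Nt) (Fin Nt) ℂ)).PosSemidef :=
        posSemidef_real_smul_one hl
      have h := hsm.conjTranspose_mul_mul_same (1 + Q * T)
      rwa [hconjT] at h
    · have hDh : (Wt - T)ᴴ = Wt - T := (hWth.sub hTh).eq
      have h := hVpsd.conjTranspose_mul_mul_same (Wt - T)
      rwa [hDh] at h
  obtain ⟨D, hD⟩ : ∃ X : Matrix (Fin Nt) (Fin Nt) ℂ, X = Wt - T := ⟨_, rfl⟩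
  have hDpsd : D.PosSemidef := by rw [hD]; exact hDpsd0
  -- Φ facts
  have hΦpsd : Φ.PosSemidef := by rw [hΦ, hR]; exact phi_psd T Q hTpsd hQpsd
  have hΦ'psd : Φ'.PosSemidef := by rw [hΦ', hR']; exact phi_psd T Q' hTpsd hQ'psd
  have hΦh : Φᴴ = Φ := hΦpsd.isHermitian
  have hΦ'h : Φ'ᴴ = Φ' := hΦ'psd.isHermitian
  have hΦR : Φ * R = Q := by rw [hΦ, hR]; exact phi_mul T Q hTpsd hQpsd
  have hΦ'R : Φ' * R' = Q' := by rw [hΦ', hR']; exact phi_mul T Q' hTpsd hQ'psd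
  -- master γ
  have hγ0 : Φ' * (1 - (-T) * Q') = Q' := by
    have e : (1 : Matrix (Fin Nt) (Fin Nt) ℂ) - (-T) * Q' = R' := by rw [hR']; noncomm_ring
    rw [e]; exact hΦ'R
  have hγ2 : (1 - Q * (-T)) * Φ = Q := by
    have e : (1 : Matrix (Fin Nt) (Fin Nt) ℂ) - Q * (-T) = 1 + Q * T := by noncomm_ring
    rw [e]
    have h := congrArg conjTranspose hΦR
    rwa [conjTranspose_mul, hΦh, hQh, hR, hconjT2] at h
  have hγ'2 : (1 - Q' * (-T)) * Φ' = Q' := by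
    have e : (1 : Matrix (Fin Nt) (Fin Nt) ℂ) - Q' * (-T) = 1 + Q' * T := by noncomm_ring
    rw [e]
    have hconjT2' : (1 + T * Q')ᴴ = 1 + Q' * T := by
      rw [conjTranspose_add, conjTranspose_one, conjTranspose_mul, hTh.eq, hQ'h]
    have h := congrArg conjTranspose hΦ'R
    rwa [conjTranspose_mul, hΦ'h, hQ'h, hR', hconjT2'] at h
  have idγ := SecrecyAux.master hγ0 hγ2 hγ'2
  have idγ2 : Φ' - Φ = (1 - Φ * T) * (Q' - Q) * (1 - T * Φ)
      - (Φ' - Φ) * (T + T * Q' * T) * (Φ' - Φ) := by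
    calc Φ' - Φ = (1 + Φ * (-T)) * (Q' - Q) * (1 + (-T) * Φ)
        + (Φ' - Φ) * ((-T) - (-T) * Q' * (-T)) * (Φ' - Φ) := idγ
      _ = (1 - Φ * T) * (Q' - Q) * (1 - T * Φ)
        - (Φ' - Φ) * (T + T * Q' * T) * (Φ' - Φ) := by noncomm_ring
  -- resolvent forms
  have hTΦ : (1 : Matrix (Fin Nt) (Fin Nt) ℂ) - T * Φ = R⁻¹ := by
    calc (1 : Matrix (Fin Nt) (Fin Nt) ℂ) - T * Φ
        = R * R⁻¹ - T * (Q * R⁻¹) := by rw [mul_nonsing_inv _ huR, hΦ]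
      _ = (R - T * Q) * R⁻¹ := by noncomm_ring
      _ = R⁻¹ := by
          rw [hR]
          have e : (1 : Matrix (Fin Nt) (Fin Nt) ℂ) + T * Q - T * Q = 1 := by abel
          rw [e, Matrix.one_mul, ← hR]
  have hΦT : (1 : Matrix (Fin Nt) (Fin Nt) ℂ) - Φ * T = (1 + Q * T)⁻¹ := by
    have h := congrArg conjTranspose hTΦ
    rwa [conjTranspose_sub, conjTranspose_one, conjTranspose_mul, hΦh, hTh.eq,
      conjTranspose_nonsing_inv, hR, conjTranspose_add, conjTranspose_one,
      conjTranspose_mul, hTh.eq, hQh] at h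
  -- sqrt of D
  obtain ⟨sD, hsDpsd, hsDh, hsDss⟩ :
      ∃ s : Matrix (Fin Nt) (Fin Nt) ℂ, s.PosSemidef ∧ sᴴ = s ∧ s * s = D :=
    ⟨hDpsd.sqrt, hDpsd.posSemidef_sqrt, hDpsd.posSemidef_sqrt.isHermitian, hDpsd.sqrt_mul_self⟩
  obtain ⟨Bm, hBm⟩ : ∃ X : Matrix (Fin Nt) (Fin Nt) ℂ, X = 1 + sD * Φ * sD := ⟨_, rfl⟩
  obtain ⟨Bm', hBm'⟩ : ∃ X : Matrix (Fin Nt) (Fin Nt) ℂ, X = 1 + sD * Φ' * sD := ⟨_, rfl⟩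
  have hBmpd : Bm.PosDef := by
    rw [hBm]
    apply Matrix.PosDef.one.add_posSemidef
    have h := hΦpsd.conjTranspose_mul_mul_same sD
    rwa [hsDh] at h
  have hBm'pd : Bm'.PosDef := by
    rw [hBm']
    apply Matrix.PosDef.one.add_posSemidef
    have h := hΦ'psd.conjTranspose_mul_mul_same sD
    rwa [hsDh] at h
  have huBm : IsUnit Bm.det := isUnit_iff_ne_zero.mpr (ne_of_gt hBmpd.det_pos)
  obtain ⟨E, hE⟩ : ∃ X : Matrix (Fin Nt) (Fin Nt) ℂ, X = sD * Bm⁻¹ * sD := ⟨_, rfl⟩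
  have hEpsd : E.PosSemidef := by
    rw [hE]
    have h := hBmpd.inv.posSemidef.conjTranspose_mul_mul_same sD
    rwa [hsDh] at h
  -- E = (1 + D Φ)⁻¹ D
  have pushE : sD * Bm⁻¹ = (1 + D * Φ)⁻¹ * sD := by
    have hu2 : IsUnit (1 + sD * Φ * sD).det := by rw [← hBm]; exact huBm
    have h := SecrecyAux.pushthrough (sD * Φ) sD hu2
    rw [← Matrix.mul_assoc sD sD Φ, hsDss] at h
    rw [hBm]
    exact h
  have hE2 : E = (1 + D * Φ)⁻¹ * D := by
    rw [hE, pushE, Matrix.mul_assoc, hsDss]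
  -- (1 + DΦ) R = 1 + W1 Q
  have hDΦR : (1 + D * Φ) * R = 1 + W1 * Q := by
    calc (1 + D * Φ) * R = R + D * (Φ * R) := by noncomm_ring
      _ = R + D * Q := by rw [hΦR]
      _ = 1 + Wt * Q := by rw [hR, hD]; noncomm_ring
      _ = 1 + W1 * Q := h1WtQ
  -- GM : R⁻¹ E (1+QT)⁻¹ = l • 1
  have hGM0 : D = (1 + W1 * Q) * ((l : ℂ) • (1 : Matrix (Fin Nt) (Fin Nt) ℂ)) * (1 + Q * T) := by
    have c1 : (1 + W1 * Q) * M = Wt := by rw [← h1WtQ]; exact hWtM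
    have key : (1 + W1 * Q) * (M - K2) * (1 + Q * T) = D := by
      calc (1 + W1 * Q) * (M - K2) * (1 + Q * T)
          = ((1 + W1 * Q) * M) * (1 + Q * T) - (1 + W1 * Q) * (K2 * (1 + Q * T)) := by
            noncomm_ring
        _ = Wt * (1 + Q * T) - (1 + W1 * Q) * T := by rw [c1, hK2W]
        _ = (Wt - T) + ((Wt * Q) * T - (W1 * Q) * T) := by noncomm_ring
        _ = D := by rw [hWtQ, hD, sub_self, add_zero]
    rw [← hMK2, key]
  have hGM : R⁻¹ * E * (1 + Q * T)⁻¹ = (l : ℂ) • (1 : Matrix (Fin Nt) (Fin Nt) ℂ) := by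
    have c3 : R⁻¹ * (1 + D * Φ)⁻¹ = (1 + W1 * Q)⁻¹ := by
      rw [← Matrix.mul_inv_rev, hDΦR]
    have eD : D * (1 + Q * T)⁻¹ = (l : ℂ) • (1 + W1 * Q) := by
      rw [hGM0, Matrix.mul_assoc ((1 + W1 * Q) * ((l : ℂ) • 1)) (1 + Q * T) (1 + Q * T)⁻¹,
        mul_nonsing_inv _ huQT, Matrix.mul_one, mul_smul_comm, Matrix.mul_one]
    calc R⁻¹ * E * (1 + Q * T)⁻¹
        = (R⁻¹ * (1 + D * Φ)⁻¹) * (D * (1 + Q * T)⁻¹) := by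
          rw [hE2]; simp only [Matrix.mul_assoc]
      _ = (1 + W1 * Q)⁻¹ * ((l : ℂ) • (1 + W1 * Q)) := by rw [c3, eD]
      _ = (l : ℂ) • (1 : Matrix (Fin Nt) (Fin Nt) ℂ) := by
          rw [mul_smul_comm, nonsing_inv_mul _ hu1]
  -- trace chain
  have hDφh : (Φ' - Φ)ᴴ = Φ' - Φ := by rw [conjTranspose_sub, hΦ'h, hΦh]
  have hS2psd : (T + T * Q' * T).PosSemidef := by
    apply hTpsd.add
    have h := hQ'psd.conjTranspose_mul_mul_same T
    rwa [hTh.eq] at h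
  have hsand : ((Φ' - Φ) * (T + T * Q' * T) * (Φ' - Φ)).PosSemidef := by
    have h := hS2psd.conjTranspose_mul_mul_same (Φ' - Φ)
    rwa [hDφh] at h
  have htr1 : (E * (Φ' - Φ)).trace.re
      ≤ (E * ((1 - Φ * T) * (Q' - Q) * (1 - T * Φ))).trace.re := by
    have e0 : E * (Φ' - Φ) = E * ((1 - Φ * T) * (Q' - Q) * (1 - T * Φ)
        - (Φ' - Φ) * (T + T * Q' * T) * (Φ' - Φ)) := by rw [← idγ2]
    have e1 := e0.trans (Matrix.mul_sub _ _ _)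
    rw [e1, trace_sub, Complex.sub_re]
    have h0 : 0 ≤ (E * ((Φ' - Φ) * (T + T * Q' * T) * (Φ' - Φ))).trace.re :=
      trace_mul_psd_re_nonneg hEpsd hsand
    linarith
  have htr2 : (E * ((1 - Φ * T) * (Q' - Q) * (1 - T * Φ))).trace
      = (l : ℂ) • (Q' - Q).trace := by
    rw [hΦT, hTΦ]
    have e1 : E * ((1 + Q * T)⁻¹ * (Q' - Q) * R⁻¹)
        = (E * (1 + Q * T)⁻¹ * (Q' - Q)) * R⁻¹ := by
      simp only [Matrix.mul_assoc]
    rw [e1, trace_mul_comm]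
    have e2 : R⁻¹ * (E * (1 + Q * T)⁻¹ * (Q' - Q))
        = (R⁻¹ * E * (1 + Q * T)⁻¹) * (Q' - Q) := by
      simp only [Matrix.mul_assoc]
    rw [e2, hGM, smul_mul_assoc, Matrix.one_mul, trace_smul]
  have hl0 : ((l : ℂ) • (Q' - Q).trace).re ≤ 0 := by
    rw [trace_sub]
    have e3 : ((l : ℂ) • (Q'.trace - Q.trace)).re = l * (Q'.trace.re - Q.trace.re) := by
      rw [smul_eq_mul, Complex.re_ofReal_mul, Complex.sub_re]
    rw [e3]
    nlinarith [mul_le_mul_of_nonneg_left hQ'tr hl]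
  -- tangent inequality
  have hBdiff : Bm' - Bm = sD * (Φ' - Φ) * sD := by rw [hBm, hBm']; noncomm_ring
  have httr : (Bm⁻¹ * (Bm' - Bm)).trace = (E * (Φ' - Φ)).trace := by
    rw [hBdiff]
    have e1 : Bm⁻¹ * (sD * (Φ' - Φ) * sD) = (Bm⁻¹ * (sD * (Φ' - Φ))) * sD := by
      simp only [Matrix.mul_assoc]
    rw [e1, trace_mul_comm]
    have e2 : sD * (Bm⁻¹ * (sD * (Φ' - Φ))) = (sD * Bm⁻¹ * sD) * (Φ' - Φ) := by
      simp only [Matrix.mul_assoc]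
    rw [e2, ← hE]
  have hblog : Real.log Bm'.det.re ≤ Real.log Bm.det.re := by
    have htan := log_det_tangent hBm'pd hBmpd
    rw [httr] at htan
    have h4 : (E * ((1 - Φ * T) * (Q' - Q) * (1 - T * Φ))).trace.re
        = ((l : ℂ) • (Q' - Q).trace).re := by rw [htr2]
    linarith
  -- determinant factorizations
  have hDΦR' : (1 + D * Φ') * R' = 1 + Wt * Q' := by
    calc (1 + D * Φ') * R' = R' + D * (Φ' * R') := by noncomm_ring
      _ = R' + D * Q' := by rw [hΦ'R]
      _ = 1 + Wt * Q' := by rw [hR', hD]; noncomm_ring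
  have hdetB : (1 + D * Φ).det = Bm.det := by
    rw [← hsDss, Matrix.mul_assoc, det_one_add_mul_comm sD (sD * Φ), hBm]
  have hdetB' : (1 + D * Φ').det = Bm'.det := by
    rw [← hsDss, Matrix.mul_assoc, det_one_add_mul_comm sD (sD * Φ'), hBm']
  have hdet1 : (1 + W1 * Q).det = Bm.det * R.det := by
    rw [← hdetB, ← det_mul, hDΦR]
  have hdet1' : (1 + Wt * Q').det = Bm'.det * R'.det := by
    rw [← hdetB', ← det_mul, hDΦR']
  -- monotonicity at Q'
  obtain ⟨sQ', hsQ'psd, hsQ'h, hsQ'ss⟩ :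
      ∃ s : Matrix (Fin Nt) (Fin Nt) ℂ, s.PosSemidef ∧ sᴴ = s ∧ s * s = Q' :=
    ⟨hQ'psd.sqrt, hQ'psd.posSemidef_sqrt, hQ'psd.posSemidef_sqrt.isHermitian,
      hQ'psd.sqrt_mul_self⟩
  have hc1 : (1 + W1 * Q').det = (1 + sQ' * W1 * sQ').det := by
    rw [← hsQ'ss]
    have e : W1 * (sQ' * sQ') = (W1 * sQ') * sQ' := by rw [Matrix.mul_assoc]
    rw [e, det_one_add_mul_comm, ← Matrix.mul_assoc]
  have hc2 : (1 + Wt * Q').det = (1 + sQ' * Wt * sQ').det := by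
    rw [← hsQ'ss]
    have e : Wt * (sQ' * sQ') = (Wt * sQ') * sQ' := by rw [Matrix.mul_assoc]
    rw [e, det_one_add_mul_comm, ← Matrix.mul_assoc]
  have hPpd : (1 + sQ' * W1 * sQ').PosDef := by
    apply Matrix.PosDef.one.add_posSemidef
    have h := hW1psd.conjTranspose_mul_mul_same sQ'
    rwa [hsQ'h] at h
  have hSpsd2 : (sQ' * (Wt - W1) * sQ').PosSemidef := by
    have h := hβPSD.conjTranspose_mul_mul_same sQ'
    rwa [hsQ'h] at h
  have hsum : (1 + sQ' * W1 * sQ') + sQ' * (Wt - W1) * sQ' = 1 + sQ' * Wt * sQ' := by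
    noncomm_ring
  have hmono : (1 + W1 * Q').det.re ≤ (1 + Wt * Q').det.re := by
    rw [hc1, hc2, ← hsum]
    exact det_re_mono hPpd hSpsd2
  -- real det relations
  have hRre : R.det = (((1 + G * Q * Gᴴ).det.re : ℝ) : ℂ) := by
    rw [← dA2]; exact posDef_det_eq_re hA2pd
  have hR're : R'.det = (((1 + G * Q' * Gᴴ).det.re : ℝ) : ℂ) := by
    rw [← dA2']; exact posDef_det_eq_re hA2'pd
  have e_a1 : (1 + H * Q * Hᴴ).det.re = Bm.det.re * (1 + G * Q * Gᴴ).det.re := by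
    have h : (1 + H * Q * Hᴴ).det = Bm.det * R.det := by rw [dA1, hdet1]
    rw [posDef_det_eq_re hBmpd, hRre] at h
    rw [h, ← Complex.ofReal_mul, Complex.ofReal_re]
  have e_a1' : (1 + H * Q' * Hᴴ).det.re ≤ Bm'.det.re * (1 + G * Q' * Gᴴ).det.re := by
    have h : (1 + Wt * Q').det = Bm'.det * R'.det := hdet1'
    rw [posDef_det_eq_re hBm'pd, hR're] at h
    have h2 : (1 + H * Q' * Hᴴ).det.re = (1 + W1 * Q').det.re := by rw [dA1']
    rw [h2]
    have h3 : (1 + Wt * Q').det.re = Bm'.det.re * (1 + G * Q' * Gᴴ).det.re := by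
      have h4 := congrArg Complex.re h
      rwa [← Complex.ofReal_mul, Complex.ofReal_re] at h4
    rw [← h3]
    exact hmono
  -- positivity
  have ha1' : (0:ℝ) < (1 + H * Q' * Hᴴ).det.re := posDef_det_re_pos hA1'pd
  have ha2 : (0:ℝ) < (1 + G * Q * Gᴴ).det.re := posDef_det_re_pos hA2pd
  have ha2' : (0:ℝ) < (1 + G * Q' * Gᴴ).det.re := posDef_det_re_pos hA2'pd
  have hb : (0:ℝ) < Bm.det.re := posDef_det_re_pos hBmpd
  have hb' : (0:ℝ) < Bm'.det.re := posDef_det_re_pos hBm'pd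
  -- final chain
  unfold secrecyRate
  have hlog1 : Real.log (1 + H * Q * Hᴴ).det.re
      = Real.log Bm.det.re + Real.log (1 + G * Q * Gᴴ).det.re := by
    rw [e_a1, Real.log_mul (ne_of_gt hb) (ne_of_gt ha2)]
  have hlog2 : Real.log (1 + H * Q' * Hᴴ).det.re
      ≤ Real.log Bm'.det.re + Real.log (1 + G * Q' * Gᴴ).det.re := by
    calc Real.log (1 + H * Q' * Hᴴ).det.re
        ≤ Real.log (Bm'.det.re * (1 + G * Q' * Gᴴ).det.re) := Real.log_le_log ha1' e_a1'
      _ = Real.log Bm'.det.re + Real.log (1 + G * Q' * Gᴴ).det.re :=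
          Real.log_mul (ne_of_gt hb') (ne_of_gt ha2')
  linarith
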